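/- Let X, Y, Z be square matrices satisfying XY = (1/2)Z, YZ = (1/2)X, ZX = (1/2)Y, XY+YX = YZ+ZY = ZX+XZ = 0, and X² = Y² = Z² = −(1/4)I. Then for all real s, t: e^{tY} e^{−sX} e^{−tY} = cos(s/2)·I − 2 sin(s/2) cos t · X + 2 sin(s/2) sin t · Z. -/

import Mathlib

open NormedSpace

lemma exp_aux {n : ℕ} (W : Matrix (Fin n) (Fin n) ℂ)
    (hW : W * W = -((1/4 : ℂ) • (1 : Matrix (Fin n) (Fin n) ℂ))) (a : ℝ) :
    exp ((a : ℂ) • W) =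
      (Real.cos (a/2) : ℂ) • (1 : Matrix (Fin n) (Fin n) ℂ)
        + ((2 * Real.sin (a/2) : ℝ) : ℂ) • W := by
  letI : SeminormedRing (Matrix (Fin n) (Fin n) ℂ) := Matrix.linftyOpSemiNormedRing
  letI : NormedRing (Matrix (Fin n) (Fin n) ℂ) := Matrix.linftyOpNormedRing
  letI : NormedAlgebra ℝ (Matrix (Fin n) (Fin n) ℂ) := Matrix.linftyOpNormedAlgebra
  have hJ : ((2:ℂ) • W) * ((2:ℂ) • W) = -1 := by
    rw [smul_mul_assoc, mul_smul_comm, hW, smul_neg, smul_neg, smul_smul, smul_smul]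
    norm_num
  set ψ := Complex.liftAux ((2:ℂ) • W) hJ with hψ
  have hcont : Continuous ψ := ψ.toLinearMap.continuous_of_finiteDimensional
  have key := map_exp ψ hcont (((a/2 : ℝ) : ℂ) * Complex.I)
  have h1 : exp (((a/2 : ℝ) : ℂ) * Complex.I) = Complex.exp (((a/2 : ℝ) : ℂ) * Complex.I) := by
    rw [Complex.exp_eq_exp_ℂ]
  have h2 : exp (ψ (((a/2 : ℝ) : ℂ) * Complex.I)) = exp (ψ (((a/2 : ℝ) : ℂ) * Complex.I)) := by
    rfl
  rw [h1, Complex.exp_mul_I] at key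
  have h3 : ψ (((a/2 : ℝ) : ℂ) * Complex.I) = (a : ℂ) • W := by
    rw [hψ, Complex.liftAux_apply]
    simp only [Complex.mul_I_re, Complex.mul_I_im, Complex.ofReal_re, Complex.ofReal_im,
      neg_zero, map_zero, zero_add]
    match_scalars <;> ring_nf <;>
      simp [← Complex.ofReal_cos, ← Complex.ofReal_sin, ← Complex.ofReal_ofNat,
        ← Complex.ofReal_mul, ← Complex.ofReal_one, ← Complex.ofReal_div]
  rw [h3] at key
  have key' : exp ((a : ℂ) • W) = ψ (Complex.cos ((a/2 : ℝ) : ℂ) + Complex.sin ((a/2 : ℝ) : ℂ) * Complex.I) := key.symm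
  rw [key', hψ, Complex.liftAux_apply]
  simp only [Complex.add_re, Complex.add_im, Complex.mul_re, Complex.mul_im,
    Complex.I_re, Complex.I_im, Complex.cos_ofReal_re, Complex.cos_ofReal_im,
    Complex.sin_ofReal_re, Complex.sin_ofReal_im, Algebra.algebraMap_eq_smul_one]
  match_scalars <;> ring_nf <;>
      simp [← Complex.ofReal_cos, ← Complex.ofReal_sin, ← Complex.ofReal_ofNat,
        ← Complex.ofReal_mul, ← Complex.ofReal_one, ← Complex.ofReal_div,
        ← Complex.ofReal_inv]

theorem stmt_8 {n : ℕ} (X Y Z : Matrix (Fin n) (Fin n) ℂ)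
    (hXY : X * Y = (1/2 : ℂ) • Z) (hYZ : Y * Z = (1/2 : ℂ) • X)
    (hZX : Z * X = (1/2 : ℂ) • Y)
    (aXY : X * Y + Y * X = 0) (aYZ : Y * Z + Z * Y = 0) (aZX : Z * X + X * Z = 0)
    (hX2 : X * X = -((1/4 : ℂ) • (1 : Matrix (Fin n) (Fin n) ℂ)))
    (hY2 : Y * Y = -((1/4 : ℂ) • (1 : Matrix (Fin n) (Fin n) ℂ)))
    (hZ2 : Z * Z = -((1/4 : ℂ) • (1 : Matrix (Fin n) (Fin n) ℂ)))
    (s t : ℝ) :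
    exp ((t : ℂ) • Y) * exp (-((s : ℂ) • X)) * exp (-((t : ℂ) • Y)) =
      (Real.cos (s / 2) : ℂ) • (1 : Matrix (Fin n) (Fin n) ℂ)
        - ((2 * Real.sin (s / 2) * Real.cos t : ℝ) : ℂ) • X
        + ((2 * Real.sin (s / 2) * Real.sin t : ℝ) : ℂ) • Z := by
  have hYX : Y * X = -((1/2 : ℂ) • Z) := by
    have h := aXY; rw [hXY] at h; first
      | exact eq_neg_of_add_eq_zero_left h
      | exact eq_neg_of_add_eq_zero_right h
      | exact (neg_eq_of_add_eq_zero_left h).symm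
      | exact (neg_eq_of_add_eq_zero_right h).symm
  have hZY : Z * Y = -((1/2 : ℂ) • X) := by
    have h := aYZ; rw [hYZ] at h; first
      | exact eq_neg_of_add_eq_zero_left h
      | exact eq_neg_of_add_eq_zero_right h
      | exact (neg_eq_of_add_eq_zero_left h).symm
      | exact (neg_eq_of_add_eq_zero_right h).symm
  have hXZ : X * Z = -((1/2 : ℂ) • Y) := by
    have h := aZX; rw [hZX] at h; first
      | exact eq_neg_of_add_eq_zero_left h
      | exact eq_neg_of_add_eq_zero_right h
      | exact (neg_eq_of_add_eq_zero_left h).symm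
      | exact (neg_eq_of_add_eq_zero_right h).symm
  have e1 := exp_aux Y hY2 t
  have e2 := exp_aux X hX2 (-s)
  have e3 := exp_aux Y hY2 (-t)
  have h2 : -((s : ℂ) • X) = ((-s : ℝ) : ℂ) • X := by push_cast; rw [neg_smul]
  have h3 : -((t : ℂ) • Y) = ((-t : ℝ) : ℂ) • Y := by push_cast; rw [neg_smul]
  rw [h2, h3, e1, e2, e3]
  have hct : Real.cos t = 1 - 2 * Real.sin (t/2)^2 := by
    have h := Real.cos_two_mul (t/2)
    rw [show 2*(t/2) = t by ring] at h
    rw [h, Real.cos_sq']; ring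
  have hst : Real.sin t = 2 * Real.sin (t/2) * Real.cos (t/2) := by
    have h := Real.sin_two_mul (t/2)
    rw [show 2*(t/2) = t by ring] at h
    exact h
  rw [hct, hst]
  simp only [neg_div, Real.cos_neg, Real.sin_neg, mul_neg]
  simp only [mul_add, add_mul, smul_mul_assoc, mul_smul_comm, mul_one, one_mul, smul_smul,
    mul_assoc, hXY, hYX, hYZ, hZY, hZX, hXZ, hX2, hY2, hZ2, smul_neg, neg_smul, mul_neg, neg_mul, neg_neg]
  match_scalars <;> push_cast <;>
    first
      | ring1
      | linear_combination Complex.cos ((s:ℂ)/2) * Complex.sin_sq_add_cos_sq ((t:ℂ)/2)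
      | linear_combination (-2*Complex.sin ((s:ℂ)/2)) * Complex.sin_sq_add_cos_sq ((t:ℂ)/2)
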